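/- Let y be a real number with 0 < y ≤ 1 and let v ≥ 3 be a real number. Then G(v,y) > 1, where G(v,y) := v·∫_1^{√(v/(v−2))} ((v+y²)/(v+y²x²))^{(v+1)/2} dx. -/
import Mathlib
set_option maxHeartbeats 1000000


open MeasureTheory Real intervalIntegral

/-- The comparison function `G(v, y)`. -/
noncomputable def G (v y : ℝ) : ℝ :=
  v * ∫ x in (1 : ℝ)..Real.sqrt (v / (v - 2)),
    ((v + y ^ 2) / (v + y ^ 2 * x ^ 2)) ^ ((v + 1) / 2)

theorem stmt_8 (y v : ℝ) (hy0 : 0 < y) (hy1 : y ≤ 1) (hv : 3 ≤ v) :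
    1 < G v y := by
  have hv0 : (0:ℝ) < v := by linarith
  have hv2 : (0:ℝ) < v - 2 := by linarith
  set b := Real.sqrt (v / (v - 2)) with hbdef
  have hbsq : b ^ 2 = v / (v - 2) := Real.sq_sqrt (by positivity)
  have hb1 : 1 < b := by
    have h1 : (1:ℝ) ^ 2 < v / (v - 2) := by
      rw [one_pow, lt_div_iff₀ hv2]; linarith
    exact (Real.lt_sqrt (by positivity)).mpr (by rw [one_pow] at h1 ⊢; exact h1)
  have hb3 : b ^ 2 ≤ 3 := by
    rw [hbsq, div_le_iff₀ hv2]; linarith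
  have hveq : v * (b ^ 2 - 1) = 2 * b ^ 2 := by
    have h : b ^ 2 * (v - 2) = v := by
      field_simp at hbsq; linarith [hbsq]
    linear_combination h
  -- pointwise bound on [1, b]
  have key : ∀ x ∈ Set.Icc (1:ℝ) b,
      3/2 - x^2/2 ≤ ((v + y ^ 2) / (v + y ^ 2 * x ^ 2)) ^ ((v + 1) / 2) := by
    intro x hx
    obtain ⟨hx1, hxb⟩ := hx
    have hx2 : 1 ≤ x ^ 2 := by nlinarith
    have hx3 : x ^ 2 ≤ 3 := by nlinarith [pow_le_pow_left₀ (by linarith : (0:ℝ) ≤ x) hxb 2]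
    have hy2 : y ^ 2 ≤ 1 := by nlinarith
    have hden : 0 < v + y ^ 2 * x ^ 2 := by nlinarith [mul_nonneg (sq_nonneg y) (sq_nonneg x)]
    have hdenx : 0 < v + x ^ 2 := by nlinarith
    have hp1 : (1:ℝ) ≤ (v + 1) / 2 := by linarith
    have hp0 : (0:ℝ) ≤ (v + 1) / 2 := by linarith
    -- Bernoulli
    have hs : (-1:ℝ) ≤ -((x ^ 2 - 1) / (v + 1)) := by
      rw [neg_le_neg_iff, div_le_one (by linarith)]; linarith
    have hbern := one_add_mul_self_le_rpow_one_add hs hp1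
    have hC0 : (0:ℝ) ≤ 1 + -((x ^ 2 - 1) / (v + 1)) := by
      rw [← sub_eq_add_neg, sub_nonneg, div_le_one (by linarith)]; linarith
    have hCB : 1 + -((x ^ 2 - 1) / (v + 1)) ≤ (v + 1) / (v + x ^ 2) := by
      have heq : 1 + -((x ^ 2 - 1) / (v + 1)) = (v + 2 - x ^ 2) / (v + 1) := by
        field_simp; ring
      rw [heq, div_le_div_iff₀ (by linarith) hdenx]
      nlinarith [sq_nonneg (x ^ 2 - 1)]
    have hBA : (v + 1) / (v + x ^ 2) ≤ (v + y ^ 2) / (v + y ^ 2 * x ^ 2) := by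
      rw [div_le_div_iff₀ hdenx hden]
      nlinarith [mul_nonneg (mul_nonneg hv0.le (by linarith : (0:ℝ) ≤ 1 - y ^ 2))
        (by linarith : (0:ℝ) ≤ x ^ 2 - 1)]
    have hCBpow : (1 + -((x ^ 2 - 1) / (v + 1))) ^ ((v + 1) / 2)
        ≤ ((v + y ^ 2) / (v + y ^ 2 * x ^ 2)) ^ ((v + 1) / 2) :=
      Real.rpow_le_rpow hC0 (hCB.trans hBA) hp0
    have hval : 1 + (v + 1) / 2 * -((x ^ 2 - 1) / (v + 1)) = 3/2 - x^2/2 := by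
      field_simp; ring
    calc 3/2 - x^2/2 = 1 + (v + 1) / 2 * -((x ^ 2 - 1) / (v + 1)) := hval.symm
      _ ≤ (1 + -((x ^ 2 - 1) / (v + 1))) ^ ((v + 1) / 2) := hbern
      _ ≤ _ := hCBpow
  -- integrability
  have hcont : Continuous fun x : ℝ => ((v + y ^ 2) / (v + y ^ 2 * x ^ 2)) ^ ((v + 1) / 2) := by
    have hc : Continuous fun x : ℝ => (v + y ^ 2) / (v + y ^ 2 * x ^ 2) :=
      continuous_const.div (continuous_const.add (continuous_const.mul (continuous_pow 2)))
        (fun x => by nlinarith [mul_nonneg (sq_nonneg y) (sq_nonneg x)])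
    exact hc.rpow_const (fun x => Or.inr (by linarith))
  have hint : IntervalIntegrable
      (fun x : ℝ => ((v + y ^ 2) / (v + y ^ 2 * x ^ 2)) ^ ((v + 1) / 2)) volume 1 b :=
    hcont.intervalIntegrable 1 b
  have hint2 : IntervalIntegrable (fun x : ℝ => 3/2 - x^2/2) volume 1 b :=
    (continuous_const.sub ((continuous_pow 2).div_const 2) : Continuous fun x : ℝ => 3/2 - x^2/2).intervalIntegrable 1 b
  have hmono := intervalIntegral.integral_mono_on hb1.le hint2 hint key
  have hval2 : ∫ x in (1:ℝ)..b, (3/2 - x^2/2) = 3/2 * (b - 1) - (b ^ 3 - 1) / 6 := by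
    have h1 : IntervalIntegrable (fun x : ℝ => (3:ℝ)/2) volume 1 b :=
      intervalIntegrable_const
    have h2 : IntervalIntegrable (fun x : ℝ => x^2/2) volume 1 b :=
      ((continuous_pow 2).div_const 2 : Continuous fun x : ℝ => x^2/2).intervalIntegrable 1 b
    rw [intervalIntegral.integral_sub h1 h2, intervalIntegral.integral_const,
      intervalIntegral.integral_div, integral_pow]
    norm_num; ring
  rw [hval2] at hmono
  have hbound : 1 < v * (3/2 * (b - 1) - (b ^ 3 - 1) / 6) := by
    have hb2pos : (0:ℝ) < b ^ 2 - 1 := by nlinarith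
    have hP : 6 * (b ^ 2 - 1) < 2 * b ^ 2 * ((b - 1) * (8 - b - b ^ 2)) := by
      nlinarith [mul_nonneg (mul_nonneg (sq_nonneg (b - 1))
        (by linarith : (0:ℝ) ≤ 3 - b ^ 2)) (by linarith : (0:ℝ) ≤ b + 2),
        pow_pos (show (0:ℝ) < b - 1 by linarith) 3]
    have hmul : (v * (3/2 * (b - 1) - (b ^ 3 - 1) / 6)) * (6 * (b ^ 2 - 1))
        = 2 * b ^ 2 * ((b - 1) * (8 - b - b ^ 2)) := by
      linear_combination ((b - 1) * (8 - b - b ^ 2)) * hveq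
    have h6pos : (0:ℝ) < 6 * (b ^ 2 - 1) := by linarith
    have := hP
    rw [← hmul] at this
    calc (1:ℝ) = 6 * (b ^ 2 - 1) / (6 * (b ^ 2 - 1)) := by field_simp
      _ < _ := by
        rw [div_lt_iff₀ h6pos]
        linarith [this]
  calc (1:ℝ) < v * (3/2 * (b - 1) - (b ^ 3 - 1) / 6) := hbound
    _ ≤ G v y := by
      rw [G]
      exact mul_le_mul_of_nonneg_left hmono hv0.le
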